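/- Let R = Z/2[t] be the graded polynomial ring with |t| = 1. Let M be a finitely generated free graded R-module with homogeneous R-basis {α_1,…,α_m}, let N be another finitely generated free graded R-module, and let φ: M → N be a degree-q graded R-module map such that φ: M^g → N^{g+q} is an isomorphism for all g ≥ g_0, for some integer g_0. Then N has a homogeneous R-basis {β_1,…,β_m} such that |β_i| ≤ |α_i| + q for all i = 1,…,m. -/

import Mathlib

/-!
## Statement 18: homogeneous bases and maps of graded `ℤ/2[t]`-modules

We encode a graded module over the graded polynomial ring `R = ℤ/2[t]` (`|t| = 1`)
as a family `M : ℤ → Type` of `ℤ/2`-vector spaces together with a degree-one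
additive operator `t`.  A homogeneous `R`-basis `{α₁, …, α_m}` with `αᵢ` of degree
`dᵢ` is encoded by the requirement that in every degree `g` the elements
`t^{g-dᵢ}·αᵢ` (for the `i` with `dᵢ ≤ g`) form a `ℤ/2`-basis of `M^g`, i.e. that
the corresponding evaluation map from coefficient tuples is bijective.
-/

noncomputable section

/-- Transport along an equality of degrees. -/
def Gcast (M : ℤ → Type) [∀ g, AddCommGroup (M g)] {g g' : ℤ} (h : g = g')
    (x : M g) : M g' := by subst h; exact x

/-- Iterated application of the degree-one operator `t`. -/
def tPow (M : ℤ → Type) [∀ g, AddCommGroup (M g)] (t : ∀ g : ℤ, M g →+ M (g + 1))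
    {g : ℤ} : (k : ℕ) → M g → M (g + k)
  | 0, x => Gcast M (by omega) x
  | k + 1, x => Gcast M (by omega) (t (g + k) (tPow M t k x))

/-- `{α₁, …, α_m}`, with `αᵢ` homogeneous of degree `d i`, is a homogeneous
`ℤ/2[t]`-basis of the graded module `(M, t)`: in each degree `g` the map
`(cᵢ)ᵢ ↦ Σᵢ cᵢ · t^{g - dᵢ} αᵢ` (over the `i` with `dᵢ ≤ g`) is bijective. -/
def IsHomogeneousBasis (M : ℤ → Type) [∀ g, AddCommGroup (M g)]
    [∀ g, Module (ZMod 2) (M g)] (t : ∀ g : ℤ, M g →+ M (g + 1))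
    {m : ℕ} (d : Fin m → ℤ) (α : ∀ i, M (d i)) : Prop :=
  ∀ g : ℤ, Function.Bijective
    (fun c : {i : Fin m // d i ≤ g} → ZMod 2 =>
      ∑ i : {i : Fin m // d i ≤ g},
        c i • Gcast M (show d i.1 + ((g - d i.1).toNat : ℤ) = g by have := i.2; omega)
          (tPow M t (g - d i.1).toNat (α i.1)))

set_option linter.unusedSectionVars false

section CastLemmas

variable {M : ℤ → Type} [∀ g, AddCommGroup (M g)]

lemma Gcast_rfl {g : ℤ} (x : M g) : Gcast M rfl x = x := rfl

lemma Gcast_Gcast {g g' g'' : ℤ} (h : g = g') (h' : g' = g'') (x : M g) :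
    Gcast M h' (Gcast M h x) = Gcast M (h.trans h') x := by subst h h'; rfl

lemma Gcast_zero {g g' : ℤ} (h : g = g') : Gcast M h (0 : M g) = 0 := by subst h; rfl

lemma Gcast_eq_zero_iff {g g' : ℤ} (h : g = g') (x : M g) : Gcast M h x = 0 ↔ x = 0 := by
  subst h; rfl

lemma Gcast_smul [∀ g, Module (ZMod 2) (M g)] {g g' : ℤ} (h : g = g') (c : ZMod 2) (x : M g) :
    Gcast M h (c • x) = c • Gcast M h x := by subst h; rfl

lemma tPow_zero' (t : ∀ g : ℤ, M g →+ M (g + 1)) {g : ℤ} (k : ℕ) :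
    tPow M t k (0 : M g) = 0 := by
  induction k with
  | zero => simp [tPow, Gcast_zero]
  | succ k ih => simp [tPow, ih, Gcast_zero]

lemma t_Gcast (t : ∀ g : ℤ, M g →+ M (g + 1)) {a g : ℤ} (h : a = g) (x : M a) :
    t g (Gcast M h x) = Gcast M (by rw [h]) (t a x) := by subst h; rfl

lemma Gcast_tPow_congr (t : ∀ g : ℤ, M g →+ M (g + 1)) {g g' : ℤ} {k k' : ℕ} (hk : k = k')
    (h : g + (k : ℤ) = g') (h' : g + (k' : ℤ) = g') (x : M g) :
    Gcast M h (tPow M t k x) = Gcast M h' (tPow M t k' x) := by subst hk; rfl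

lemma Gcast_injective {g g' : ℤ} (h : g = g') : Function.Injective (Gcast M h (g := g)) := by
  subst h; exact fun x y hxy => hxy

lemma tPow_injective (t : ∀ g : ℤ, M g →+ M (g + 1))
    (ht : ∀ g, Function.Injective (t g)) (g : ℤ) (k : ℕ) :
    Function.Injective (tPow M t k : M g → M (g + k)) := by
  induction k with
  | zero => exact Gcast_injective _
  | succ k ih =>
      intro x y hxy
      exact ih (ht _ (Gcast_injective _ hxy))

end CastLemmas

section Eval

variable {M : ℤ → Type} [∀ g, AddCommGroup (M g)] [∀ g, Module (ZMod 2) (M g)]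
  (t : ∀ g : ℤ, M g →+ M (g + 1)) {m : ℕ} (d : Fin m → ℤ) (α : ∀ i, M (d i))

/-- The evaluation map of a candidate homogeneous basis, as a linear map. -/
def evalMap (g : ℤ) : ({i : Fin m // d i ≤ g} → ZMod 2) →ₗ[ZMod 2] M g where
  toFun c := ∑ i : {i : Fin m // d i ≤ g},
        c i • Gcast M (show d i.1 + ((g - d i.1).toNat : ℤ) = g by have := i.2; omega)
          (tPow M t (g - d i.1).toNat (α i.1))
  map_add' c c' := by simp [add_smul, Finset.sum_add_distrib]
  map_smul' r c := by simp [mul_smul, Finset.smul_sum]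

lemma isHomogeneousBasis_iff :
    IsHomogeneousBasis M t d α ↔ ∀ g, Function.Bijective (evalMap t d α g) := Iff.rfl

/-- Helper: rewrite a sum over a subtype as a dite-sum over `Fin m`. -/
lemma sum_subtype_dite {β : Type*} [AddCommMonoid β] (p : Fin m → Prop) [DecidablePred p]
    (F : ∀ i, p i → β) :
    ∑ i : {i // p i}, F i.1 i.2 = ∑ i : Fin m, if h : p i then F i h else 0 := by
  rw [eq_comm, Finset.sum_dite]
  simp only [Finset.sum_const_zero, add_zero]
  exact Fintype.sum_equiv (Equiv.subtypeEquivRight (fun x => by simp)) _ _ (fun x => rfl)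

end Eval

section TCompat

variable {M : ℤ → Type} [∀ g, AddCommGroup (M g)] [∀ g, Module (ZMod 2) (M g)]
  {t : ∀ g : ℤ, M g →+ M (g + 1)} {m : ℕ} {d : Fin m → ℤ} {α : ∀ i, M (d i)}

lemma t_evalMap (g : ℤ) (c : {i : Fin m // d i ≤ g} → ZMod 2) :
    t g (evalMap t d α g c)
      = evalMap t d α (g+1) (fun j => if h : d j.1 ≤ g then c ⟨j.1, h⟩ else 0) := by
  show t g (∑ i : {i : Fin m // d i ≤ g}, _) = ∑ j : {j : Fin m // d j ≤ g+1}, _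
  rw [map_sum]
  rw [sum_subtype_dite (fun i => d i ≤ g)
    (fun i h => t g ((c ⟨i,h⟩ : ZMod 2) •
      Gcast M (show d i + ((g - d i).toNat : ℤ) = g by omega) (tPow M t (g - d i).toNat (α i))))]
  rw [sum_subtype_dite (fun j => d j ≤ g+1)
    (fun j h => ((if h' : d j ≤ g then c ⟨j, h'⟩ else 0) : ZMod 2) •
      Gcast M (show d j + (((g+1) - d j).toNat : ℤ) = g+1 by omega)
        (tPow M t ((g+1) - d j).toNat (α j)))]
  apply Finset.sum_congr rfl
  intro i _
  by_cases h : d i ≤ g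
  · have h1 : d i ≤ g + 1 := by omega
    rw [dif_pos h, dif_pos h1, dif_pos h]
    rw [ZMod.map_smul (t g), t_Gcast t]
    congr 1
    rw [Gcast_tPow_congr t (show ((g+1) - d i).toNat = (g - d i).toNat + 1 by omega)
      _ (show d i + (((g - d i).toNat + 1 : ℕ) : ℤ) = g + 1 by omega)]
    show _ = Gcast M _ (Gcast M (by omega) (t _ (tPow M t (g - d i).toNat (α i))))
    rw [Gcast_Gcast]
  · rw [dif_neg h]
    by_cases h1 : d i ≤ g + 1
    · rw [dif_pos h1, dif_neg h, zero_smul]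
    · rw [dif_neg h1]

lemma t_injective_of_basis (hM : IsHomogeneousBasis M t d α) (g : ℤ) :
    Function.Injective (t g) := by
  have hB : ∀ g, Function.Bijective (evalMap t d α g) := hM
  intro x y hxy
  obtain ⟨cx, hcx'⟩ := (hB g).2 x
  obtain ⟨cy, hcy'⟩ := (hB g).2 y
  have h1 : evalMap t d α (g+1) (fun j => if h : d j.1 ≤ g then cx ⟨j.1, h⟩ else 0)
      = evalMap t d α (g+1) (fun j => if h : d j.1 ≤ g then cy ⟨j.1, h⟩ else 0) := by
    rw [← t_evalMap, ← t_evalMap, hcx', hcy', hxy]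
  have h2 := (hB (g+1)).1 h1
  have h3 : cx = cy := by
    funext i
    have := congrFun h2 ⟨i.1, by omega⟩
    simpa [dif_pos i.2] using this
  rw [← hcx', ← hcy', h3]

end TCompat

section Phi

variable {M N : ℤ → Type} [∀ g, AddCommGroup (M g)] [∀ g, Module (ZMod 2) (M g)]
  [∀ g, AddCommGroup (N g)] [∀ g, Module (ZMod 2) (N g)]
  {tM : ∀ g : ℤ, M g →+ M (g + 1)} {tN : ∀ g : ℤ, N g →+ N (g + 1)}
  {q : ℤ} {φ : ∀ g : ℤ, M g →+ N (g + q)}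

lemma phi_Gcast {a g : ℤ} (h : a = g) (x : M a) :
    φ g (Gcast M h x) = Gcast N (by rw [h]) (φ a x) := by subst h; rfl

lemma phi_tPow
    (hφ : ∀ (g : ℤ) (x : M g), φ (g + 1) (tM g x) = Gcast N (by ring) (tN (g + q) (φ g x)))
    (g : ℤ) (k : ℕ) (x : M g) :
    φ (g + k) (tPow M tM k x) = Gcast N (by omega) (tPow N tN k (φ g x)) := by
  induction k with
  | zero =>
      show φ (g + ((0:ℕ):ℤ)) (Gcast M (by omega) x) = _
      rw [phi_Gcast]
      show _ = Gcast N _ (Gcast N (by omega) (φ g x))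
      rw [Gcast_Gcast]
  | succ k ih =>
      show φ (g + ((k+1:ℕ):ℤ)) (Gcast M (by omega) (tM (g + k) (tPow M tM k x))) = _
      rw [phi_Gcast, hφ (g + k), ih, t_Gcast tN]
      show Gcast N _ (Gcast N _ (Gcast N _ (tN (g + q + k) (tPow N tN k (φ g x))))) = _
      rw [Gcast_Gcast, Gcast_Gcast]
      show _ = Gcast N _ (Gcast N (by omega) (tN (g + q + k) (tPow N tN k (φ g x))))
      rw [Gcast_Gcast]

lemma phi_injective {m : ℕ} {d : Fin m → ℤ} {α : ∀ i, M (d i)}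
    (hM : IsHomogeneousBasis M tM d α)
    (hφ : ∀ (g : ℤ) (x : M g), φ (g + 1) (tM g x) = Gcast N (by ring) (tN (g + q) (φ g x)))
    (g₀ : ℤ) (hiso : ∀ g : ℤ, g₀ ≤ g → Function.Bijective (φ g)) (g : ℤ) :
    Function.Injective (φ g) := by
  intro x y hxy
  set k : ℕ := (g₀ - g).toNat with hk
  have hg : g₀ ≤ g + k := by omega
  have h1 : φ (g + k) (tPow M tM k x) = φ (g + k) (tPow M tM k y) := by
    rw [phi_tPow hφ, phi_tPow hφ, hxy]
  have h2 := (hiso _ hg).1 h1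
  exact tPow_injective tM (t_injective_of_basis hM) g k h2

end Phi

section Dim

variable {M : ℤ → Type} [∀ g, AddCommGroup (M g)] [∀ g, Module (ZMod 2) (M g)]
  {t : ∀ g : ℤ, M g →+ M (g + 1)} {m : ℕ} {d : Fin m → ℤ} {α : ∀ i, M (d i)}

lemma finite_of_basis (hM : IsHomogeneousBasis M t d α) (g : ℤ) :
    Module.Finite (ZMod 2) (M g) := by
  have hB : ∀ g, Function.Bijective (evalMap t d α g) := hM
  exact Module.Finite.equiv (LinearEquiv.ofBijective _ (hB g))

lemma finrank_of_basis (hM : IsHomogeneousBasis M t d α) (g : ℤ) :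
    Module.finrank (ZMod 2) (M g) = Fintype.card {i : Fin m // d i ≤ g} := by
  have hB : ∀ g, Function.Bijective (evalMap t d α g) := hM
  rw [← (LinearEquiv.ofBijective _ (hB g)).finrank_eq, Module.finrank_pi]

end Dim

section Comb

variable {m : ℕ}

lemma card_subtype_perm (τ : Equiv.Perm (Fin m)) (f : Fin m → ℤ) (g : ℤ) :
    Fintype.card {i // f (τ i) ≤ g} = Fintype.card {i // f i ≤ g} :=
  Fintype.card_congr (τ.subtypeEquiv fun i => Iff.rfl)

lemma sorted_pointwise_le (a b : Fin m → ℤ)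
    (h : ∀ g, Fintype.card {i // a i ≤ g} ≤ Fintype.card {j // b j ≤ g}) (j : Fin m) :
    b (Tuple.sort b j) ≤ a (Tuple.sort a j) := by
  by_contra hc
  push_neg at hc
  set g := a (Tuple.sort a j) with hg
  have hma := Tuple.monotone_sort a
  have hmb := Tuple.monotone_sort b
  have h1 : (j : ℕ) + 1 ≤ Fintype.card {i // a i ≤ g} := by
    rw [← card_subtype_perm (Tuple.sort a) a g, Fintype.card_subtype]
    calc (j : ℕ) + 1 = (Finset.Iic j).card := (Fin.card_Iic j).symm
      _ ≤ _ := Finset.card_le_card (fun i hi => by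
          simp only [Finset.mem_filter, Finset.mem_univ, true_and]
          exact hma (Finset.mem_Iic.mp hi))
  have h2 : Fintype.card {i // b i ≤ g} ≤ (j : ℕ) := by
    rw [← card_subtype_perm (Tuple.sort b) b g, Fintype.card_subtype]
    calc (Finset.univ.filter fun i => b (Tuple.sort b i) ≤ g).card
        ≤ (Finset.Iio j).card := Finset.card_le_card (fun i hi => by
          simp only [Finset.mem_filter, Finset.mem_univ, true_and] at hi
          rw [Finset.mem_Iio]
          by_contra hij
          push_neg at hij
          have : b (Tuple.sort b j) ≤ b (Tuple.sort b i) := hmb hij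
          omega)
      _ = (j : ℕ) := Fin.card_Iio j
  have := h g
  omega

lemma exists_perm_le (a b : Fin m → ℤ)
    (h : ∀ g, Fintype.card {i // a i ≤ g} ≤ Fintype.card {j // b j ≤ g}) :
    ∃ σ : Equiv.Perm (Fin m), ∀ i, b (σ i) ≤ a i := by
  refine ⟨(Tuple.sort a).symm.trans (Tuple.sort b), fun i => ?_⟩
  have := sorted_pointwise_le a b h ((Tuple.sort a).symm i)
  simpa using this

end Comb

section Reindex

variable {N : ℤ → Type} [∀ g, AddCommGroup (N g)] [∀ g, Module (ZMod 2) (N g)]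
  {tN : ∀ g : ℤ, N g →+ N (g + 1)}

lemma IsHomogeneousBasis.reindex {m m' : ℕ} {d' : Fin m' → ℤ} {β' : ∀ i, N (d' i)}
    (hβ' : IsHomogeneousBasis N tN d' β') (σ : Fin m ≃ Fin m') :
    IsHomogeneousBasis N tN (fun i => d' (σ i)) (fun i => β' (σ i)) := by
  intro g
  have hB : ∀ g, Function.Bijective (evalMap tN d' β' g) := hβ'
  let e : {i : Fin m // d' (σ i) ≤ g} ≃ {j : Fin m' // d' j ≤ g} := σ.subtypeEquiv fun i => Iff.rfl
  have key : ∀ c : {i : Fin m // d' (σ i) ≤ g} → ZMod 2,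
      (∑ i : {i : Fin m // d' (σ i) ≤ g},
        c i • Gcast N (show d' (σ i.1) + ((g - d' (σ i.1)).toNat : ℤ) = g by have := i.2; omega)
          (tPow N tN (g - d' (σ i.1)).toNat (β' (σ i.1))))
        = evalMap tN d' β' g (fun j => c (e.symm j)) := by
    intro c
    exact Fintype.sum_equiv e _ _ (fun i => by simp [e]; rfl)
  constructor
  · intro c c' hcc
    have h1 : evalMap tN d' β' g (fun j => c (e.symm j))
        = evalMap tN d' β' g (fun j => c' (e.symm j)) := by
      rw [← key, ← key]; exact hcc
    have h2 := (hB g).1 h1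
    funext i
    have := congrFun h2 (e i)
    simpa using this
  · intro x
    obtain ⟨c, hc⟩ := (hB g).2 x
    refine ⟨fun i => c (e i), (key _).trans ?_⟩
    have h3 : (fun j => c (e (e.symm j))) = c := funext fun j => by simp
    rw [h3]; exact hc

end Reindex

/-- Let `R = ℤ/2[t]` with `|t| = 1`, let `M` be a finitely
generated free graded `R`-module with homogeneous basis `{α₁, …, α_m}` (of degrees
`d i`), let `N` be another finitely generated free graded `R`-module, and let
`φ : M → N` be a degree-`q` map of graded `R`-modules which is an isomorphism
`M^g → N^{g+q}` for all `g ≥ g₀`.  Then `N` has a homogeneous basis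
`{β₁, …, β_m}` with `deg βᵢ ≤ deg αᵢ + q` for all `i`. -/
theorem graded_module_basis_bound
    (M N : ℤ → Type) [∀ g, AddCommGroup (M g)] [∀ g, Module (ZMod 2) (M g)]
    [∀ g, AddCommGroup (N g)] [∀ g, Module (ZMod 2) (N g)]
    (tM : ∀ g : ℤ, M g →+ M (g + 1)) (tN : ∀ g : ℤ, N g →+ N (g + 1))
    -- `M` is free with homogeneous basis `α`
    (m : ℕ) (d : Fin m → ℤ) (α : ∀ i, M (d i))
    (hM : IsHomogeneousBasis M tM d α)
    -- `N` is finitely generated free graded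
    (hN : ∃ (m' : ℕ) (d' : Fin m' → ℤ) (β' : ∀ i, N (d' i)),
      IsHomogeneousBasis N tN d' β')
    -- `φ` is a degree-`q` map of graded `R`-modules
    (q : ℤ) (φ : ∀ g : ℤ, M g →+ N (g + q))
    (hφ : ∀ (g : ℤ) (x : M g), φ (g + 1) (tM g x) = Gcast N (by omega) (tN (g + q) (φ g x)))
    -- which is an isomorphism in all degrees `g ≥ g₀`
    (g₀ : ℤ) (hiso : ∀ g : ℤ, g₀ ≤ g → Function.Bijective (φ g)) :
    ∃ (e : Fin m → ℤ) (β : ∀ i, N (e i)),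
      IsHomogeneousBasis N tN e β ∧ ∀ i, e i ≤ d i + q := by
  classical
  obtain ⟨m', d', β', hβ'⟩ := hN
  have hinj : ∀ g, Function.Injective (φ g) := phi_injective hM hφ g₀ hiso
  have hle : ∀ g : ℤ, Fintype.card {i : Fin m // d i ≤ g}
      ≤ Fintype.card {j : Fin m' // d' j ≤ g + q} := by
    intro g
    haveI := finite_of_basis hβ' (g + q)
    have h := LinearMap.finrank_le_finrank_of_injective
      (f := (φ g).toZModLinearMap 2) (hinj g)
    rwa [finrank_of_basis hM g, finrank_of_basis hβ' (g + q)] at h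
  have heq : ∀ g : ℤ, g₀ ≤ g → Fintype.card {i : Fin m // d i ≤ g}
      = Fintype.card {j : Fin m' // d' j ≤ g + q} := by
    intro g hg
    have h := (LinearEquiv.ofBijective ((φ g).toZModLinearMap 2) (hiso g hg)).finrank_eq
    rwa [finrank_of_basis hM g, finrank_of_basis hβ' (g + q)] at h
  -- `m' = m`
  set s : Finset ℤ :=
    insert g₀ ((Finset.image d Finset.univ) ∪ (Finset.image (fun j => d' j - q) Finset.univ))
    with hs
  have hG0 : g₀ ∈ s := Finset.mem_insert_self _ _
  set G := s.max' ⟨g₀, hG0⟩ with hGdef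
  have hGa : ∀ x ∈ s, x ≤ G := fun x hx => Finset.le_max' s x hx
  have hGg₀ : g₀ ≤ G := hGa g₀ hG0
  have hGd : ∀ i, d i ≤ G := fun i => hGa _ (by simp [hs])
  have hGd' : ∀ j, d' j ≤ G + q := fun j => by
    have := hGa (d' j - q) (by simp [hs]); omega
  have hcardM : Fintype.card {i : Fin m // d i ≤ G} = m := by
    rw [Fintype.card_congr (Equiv.subtypeUnivEquiv hGd)]; simp
  have hcardN : Fintype.card {j : Fin m' // d' j ≤ G + q} = m' := by
    rw [Fintype.card_congr (Equiv.subtypeUnivEquiv hGd')]; simp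
  have hmm : m' = m := by
    have := heq G hGg₀; rw [hcardM, hcardN] at this; omega
  subst hmm
  -- matching permutation
  have hcond : ∀ g : ℤ, Fintype.card {i : Fin m' // d i + q ≤ g}
      ≤ Fintype.card {j : Fin m' // d' j ≤ g} := by
    intro g
    have h1 := hle (g - q)
    have e1 : Fintype.card {i : Fin m' // d i ≤ g - q}
        = Fintype.card {i : Fin m' // d i + q ≤ g} :=
      Fintype.card_congr (Equiv.subtypeEquivRight (fun i => by omega))
    have e2 : Fintype.card {j : Fin m' // d' j ≤ (g - q) + q}
        = Fintype.card {j : Fin m' // d' j ≤ g} :=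
      Fintype.card_congr (Equiv.subtypeEquivRight (fun j => by omega))
    omega
  obtain ⟨σ, hσ⟩ := exists_perm_le (fun i => d i + q) d' hcond
  exact ⟨fun i => d' (σ i), fun i => β' (σ i), hβ'.reindex σ, hσ⟩
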